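/- Let A be a 2×2 matrix with singular values a ≥ b > 0, and for a unit vector v at angle t write Av = l(t)(cos τ(t), sin τ(t)). Then the first projective derivative satisfies dτ/dt ≤ a/b, i.e., dτ/dt is bounded by the condition number ‖A‖·‖A⁻¹‖ of A. -/

import Mathlib

/-- Rotation matrix by angle `θ`. -/
noncomputable def rot (θ : ℝ) : Matrix (Fin 2) (Fin 2) ℝ :=
  !![Real.cos θ, -Real.sin θ; Real.sin θ, Real.cos θ]

/-- For a 2×2 matrix with singular values `a ≥ b > 0`, the projective
derivative `dτ/dt` is bounded by the condition number `a / b`. -/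
theorem stmt_1
    (a b α β : ℝ) (hb : 0 < b) (hab : b ≤ a)
    (A : Matrix (Fin 2) (Fin 2) ℝ)
    (hA : A = rot β * !![a, 0; 0, b] * rot (-α))
    (l τ : ℝ → ℝ) (hl : ∀ t, 0 < l t)
    (hdecomp : ∀ t, A.mulVec ![Real.cos t, Real.sin t]
      = l t • ![Real.cos (τ t), Real.sin (τ t)])
    (t : ℝ) (hτ : DifferentiableAt ℝ τ t) :
    deriv τ t ≤ a / b := by
  set x0 : ℝ → ℝ := fun u =>
    Real.cos β * (a * Real.cos (u - α)) - Real.sin β * (b * Real.sin (u - α)) with hx0def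
  set x1 : ℝ → ℝ := fun u =>
    Real.sin β * (a * Real.cos (u - α)) + Real.cos β * (b * Real.sin (u - α)) with hx1def
  have hx : ∀ u, A.mulVec ![Real.cos u, Real.sin u] = ![x0 u, x1 u] := by
    intro u
    subst hA
    funext i
    fin_cases i <;>
      simp [rot, Matrix.mulVec, Matrix.vecHead, Matrix.vecTail, dotProduct,
        Fin.sum_univ_two, Matrix.mul_apply, Real.cos_sub, Real.sin_sub, hx0def, hx1def,
        Real.cos_neg, Real.sin_neg] <;> ring
  have h0 : ∀ u, x0 u = l u * Real.cos (τ u) := by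
    intro u
    have h := (hx u).symm.trans (hdecomp u)
    have := congrFun h 0
    simpa using this
  have h1 : ∀ u, x1 u = l u * Real.sin (τ u) := by
    intro u
    have h := (hx u).symm.trans (hdecomp u)
    have := congrFun h 1
    simpa using this
  -- l² = x0² + x1²
  have hl2 : ∀ u, (l u) ^ 2 = x0 u ^ 2 + x1 u ^ 2 := by
    intro u
    rw [h0 u, h1 u]
    have := Real.sin_sq_add_cos_sq (τ u)
    nlinarith [this]
  have hsum : ∀ u, x0 u ^ 2 + x1 u ^ 2
      = a ^ 2 * Real.cos (u - α) ^ 2 + b ^ 2 * Real.sin (u - α) ^ 2 := by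
    intro u
    have := Real.sin_sq_add_cos_sq β
    simp only [hx0def, hx1def]
    nlinarith [this]
  have hab2 : b ^ 2 ≤ a ^ 2 := by nlinarith
  have hFpos : ∀ u, 0 < x0 u ^ 2 + x1 u ^ 2 := by
    intro u
    rw [hsum u]
    nlinarith [Real.sin_sq_add_cos_sq (u - α),
      mul_nonneg (sub_nonneg.2 hab2) (sq_nonneg (Real.cos (u - α))), mul_pos hb hb]
  -- explicit derivatives of x0, x1
  have hs : HasDerivAt (fun u : ℝ => u - α) 1 t := (hasDerivAt_id t).sub_const α
  have hc : HasDerivAt (fun u : ℝ => Real.cos (u - α)) (-Real.sin (t - α)) t := by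
    simpa [Function.comp_def] using (Real.hasDerivAt_cos (t - α)).comp t hs
  have hsn : HasDerivAt (fun u : ℝ => Real.sin (u - α)) (Real.cos (t - α)) t := by
    simpa [Function.comp_def] using (Real.hasDerivAt_sin (t - α)).comp t hs
  have hdx0 : HasDerivAt x0
      (Real.cos β * (a * (-Real.sin (t - α))) - Real.sin β * (b * Real.cos (t - α))) t := by
    exact ((hc.const_mul a).const_mul (Real.cos β)).sub
      ((hsn.const_mul b).const_mul (Real.sin β))
  have hdx1 : HasDerivAt x1
      (Real.sin β * (a * (-Real.sin (t - α))) + Real.cos β * (b * Real.cos (t - α))) t := by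
    exact ((hc.const_mul a).const_mul (Real.sin β)).add
      ((hsn.const_mul b).const_mul (Real.cos β))
  -- l is differentiable at t
  have hleq : l = fun u => Real.sqrt (x0 u ^ 2 + x1 u ^ 2) := by
    funext u
    rw [← hl2 u, Real.sqrt_sq (hl u).le]
  have hF : HasDerivAt (fun u => x0 u ^ 2 + x1 u ^ 2)
      (2 * x0 t * (Real.cos β * (a * (-Real.sin (t - α))) - Real.sin β * (b * Real.cos (t - α)))
        + 2 * x1 t * (Real.sin β * (a * (-Real.sin (t - α))) + Real.cos β * (b * Real.cos (t - α)))) t := by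
    have := (hdx0.pow 2).add (hdx1.pow 2)
    exact this.congr_deriv (by norm_num)
  have hld : DifferentiableAt ℝ l t := by
    rw [hleq]
    exact ((Real.hasDerivAt_sqrt (hFpos t).ne').comp t hF).differentiableAt
  -- product rule expressions
  set l' := deriv l t with hl'def
  set τ' := deriv τ t with hτ'def
  have hP0 : HasDerivAt (fun u => l u * Real.cos (τ u))
      (l' * Real.cos (τ t) + l t * (-Real.sin (τ t) * τ')) t :=
    (hld.hasDerivAt).mul ((Real.hasDerivAt_cos (τ t)).comp t hτ.hasDerivAt)
  have hP1 : HasDerivAt (fun u => l u * Real.sin (τ u))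
      (l' * Real.sin (τ t) + l t * (Real.cos (τ t) * τ')) t :=
    (hld.hasDerivAt).mul ((Real.hasDerivAt_sin (τ t)).comp t hτ.hasDerivAt)
  have hx0eq : x0 = fun u => l u * Real.cos (τ u) := funext h0
  have hx1eq : x1 = fun u => l u * Real.sin (τ u) := funext h1
  have hu0 : Real.cos β * (a * (-Real.sin (t - α))) - Real.sin β * (b * Real.cos (t - α))
      = l' * Real.cos (τ t) + l t * (-Real.sin (τ t) * τ') := by
    have := hP0
    rw [← hx0eq] at this
    exact hdx0.unique this
  have hu1 : Real.sin β * (a * (-Real.sin (t - α))) + Real.cos β * (b * Real.cos (t - α))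
      = l' * Real.sin (τ t) + l t * (Real.cos (τ t) * τ') := by
    have := hP1
    rw [← hx1eq] at this
    exact hdx1.unique this
  -- cross product identity: x0 * dx1 - x1 * dx0 = a*b and = l² τ'
  have hcross : (l t) ^ 2 * τ' = a * b := by
    have e1 : x0 t * (Real.sin β * (a * (-Real.sin (t - α))) + Real.cos β * (b * Real.cos (t - α)))
        - x1 t * (Real.cos β * (a * (-Real.sin (t - α))) - Real.sin β * (b * Real.cos (t - α)))
        = a * b := by
      simp only [hx0def, hx1def]
      have hb1 := Real.sin_sq_add_cos_sq β
      have hb2 := Real.sin_sq_add_cos_sq (t - α)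
      calc (Real.cos β * (a * Real.cos (t - α)) - Real.sin β * (b * Real.sin (t - α))) *
              (Real.sin β * (a * (-Real.sin (t - α))) + Real.cos β * (b * Real.cos (t - α))) -
            (Real.sin β * (a * Real.cos (t - α)) + Real.cos β * (b * Real.sin (t - α))) *
              (Real.cos β * (a * (-Real.sin (t - α))) - Real.sin β * (b * Real.cos (t - α)))
          = a * b * ((Real.sin β ^ 2 + Real.cos β ^ 2) *
              (Real.sin (t - α) ^ 2 + Real.cos (t - α) ^ 2)) := by ring
        _ = a * b := by rw [hb1, hb2]; ring
    have e2 : x0 t * (Real.sin β * (a * (-Real.sin (t - α))) + Real.cos β * (b * Real.cos (t - α)))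
        - x1 t * (Real.cos β * (a * (-Real.sin (t - α))) - Real.sin β * (b * Real.cos (t - α)))
        = (l t) ^ 2 * τ' := by
      rw [hu0, hu1, h0 t, h1 t]
      have hτ1 := Real.sin_sq_add_cos_sq (τ t)
      calc l t * Real.cos (τ t) * (l' * Real.sin (τ t) + l t * (Real.cos (τ t) * τ')) -
            l t * Real.sin (τ t) * (l' * Real.cos (τ t) + l t * (-Real.sin (τ t) * τ'))
          = l t ^ 2 * τ' * (Real.sin (τ t) ^ 2 + Real.cos (τ t) ^ 2) := by ring
        _ = l t ^ 2 * τ' := by rw [hτ1]; ring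
    rw [← e2, e1]
  -- l² ≥ b²
  have hlb : b ^ 2 ≤ (l t) ^ 2 := by
    rw [hl2 t, hsum t]
    nlinarith [Real.sin_sq_add_cos_sq (t - α),
      mul_nonneg (sub_nonneg.2 hab2) (sq_nonneg (Real.cos (t - α)))]
  have hlpos : 0 < (l t) ^ 2 := lt_of_lt_of_le (by positivity) hlb
  -- conclude
  have ha : 0 < a := lt_of_lt_of_le hb hab
  have h' : a * b ^ 2 ≤ a * (l t) ^ 2 := mul_le_mul_of_nonneg_left hlb ha.le
  have hτb : τ' * b ≤ a := by nlinarith [hcross, hlpos, h']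
  exact (le_div_iff₀ hb).mpr hτb
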